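/- For any dimension d ≥ 1 and exponent β > 0, the integral of ‖x‖^β (sup-norm) over the hypercube (-h, h)^d equals (d/(d+β))·2^d·h^{d+β}. -/

import Mathlib

open MeasureTheory Real

open Set

/-- The integral of the sup-norm to the power β over the open hypercube (-h,h)^d
equals (d/(d+β))·2^d·h^{d+β}. -/
theorem cube_integral_supnorm_pow (d : ℕ) (hd : 1 ≤ d) (β h : ℝ) (hβ : 0 < β) (hh : 0 < h) :
    ∫ x : Fin d → ℝ in Set.univ.pi (fun _ => Set.Ioo (-h) h), ‖x‖ ^ β
      = ((d : ℝ) / ((d : ℝ) + β)) * 2 ^ d * h ^ ((d : ℝ) + β) := by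
  have hcube : Set.univ.pi (fun _ : Fin d => Set.Ioo (-h) h) = Metric.ball (0 : Fin d → ℝ) h := by
    rw [ball_pi _ hh]; simp [Real.ball_eq_Ioo]
  have hvolcb : ∀ s : ℝ, 0 ≤ s →
      volume (Metric.closedBall (0 : Fin d → ℝ) s) = ENNReal.ofReal (2*s) ^ d := by
    intro s hs
    rw [closedBall_pi _ hs]
    simp [Real.closedBall_eq_Icc, Real.volume_Icc_pi]
    ring_nf
    rw [ENNReal.ofReal_mul hs, mul_pow, ENNReal.ofReal_ofNat]
  have hvolball : volume (Metric.ball (0 : Fin d → ℝ) h) = ENNReal.ofReal (2*h) ^ d := by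
    rw [ball_pi _ hh]
    simp [Real.ball_eq_Ioo, volume_pi_pi]
    ring_nf
    rw [ENNReal.ofReal_mul hh.le, mul_pow, ENNReal.ofReal_ofNat]
  rw [hcube]
  set μ := volume.restrict (Metric.ball (0 : Fin d → ℝ) h) with hμ
  have hcont : Continuous fun x : Fin d → ℝ => ‖x‖ ^ β :=
    continuous_norm.rpow_const (fun x => Or.inr hβ.le)
  have hint : Integrable (fun x : Fin d → ℝ => ‖x‖ ^ β) μ :=
    (hcont.continuousOn.integrableOn_compact (isCompact_closedBall 0 h)).mono_set
      Metric.ball_subset_closedBall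
  have hnn : 0 ≤ᵐ[μ] fun x : Fin d → ℝ => ‖x‖ ^ β :=
    Filter.Eventually.of_forall fun x => Real.rpow_nonneg (norm_nonneg x) β
  have hlayer := hint.integral_eq_integral_meas_lt hnn
  simp only [measureReal_def] at hlayer
  set c : ℝ := h ^ β with hc
  have hc0 : 0 < c := Real.rpow_pos_of_pos hh β
  set g : ℝ → ℝ := fun t => (2*h)^d - (2 * t ^ (1/β))^d with hg
  have hmeas : ∀ t ∈ Ioi (0:ℝ), (μ {a | t < ‖a‖ ^ β}).toReal = (Ioc 0 c).indicator g t := by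
    intro t ht
    have ht0 : (0:ℝ) < t := ht
    set s : ℝ := t ^ (1/β) with hs
    have hs0 : 0 < s := Real.rpow_pos_of_pos ht0 _
    have hcb : c ^ β⁻¹ = h := Real.rpow_rpow_inv hh.le hβ.ne'
    have hset : {a : Fin d → ℝ | t < ‖a‖ ^ β} = (Metric.closedBall (0:Fin d → ℝ) s)ᶜ := by
      ext a
      simp only [mem_setOf_eq, mem_compl_iff, Metric.mem_closedBall, dist_zero_right, not_le,
        hs, one_div]
      exact (Real.rpow_inv_lt_iff_of_pos ht0.le (norm_nonneg a) hβ).symm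
    rw [hset, hμ, Measure.restrict_apply measurableSet_closedBall.compl,
      Set.inter_comm, ← Set.diff_eq]
    rcases le_or_gt t c with htc | htc
    · have hsh : s ≤ h := by
        rw [hs, one_div, ← hcb]
        exact Real.rpow_le_rpow ht0.le htc (by positivity)
      have hinter : volume (Metric.closedBall (0:Fin d → ℝ) s ∩ Metric.ball 0 h)
          = ENNReal.ofReal (2*s) ^ d := by
        rcases lt_or_eq_of_le hsh with hlt | heq
        · rw [Set.inter_eq_self_of_subset_left (Metric.closedBall_subset_ball hlt)]
          exact hvolcb s hs0.le
        · rw [heq, Set.inter_eq_self_of_subset_right Metric.ball_subset_closedBall, hvolball]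
      rw [← Set.diff_inter_self_eq_diff,
        measure_diff Set.inter_subset_right
          ((measurableSet_closedBall.inter measurableSet_ball).nullMeasurableSet)
          (by rw [hinter]; exact ENNReal.pow_ne_top ENNReal.ofReal_ne_top),
        hinter, hvolball]
      rw [Set.indicator_of_mem (show t ∈ Ioc 0 c from ⟨ht0, htc⟩) g]
      rw [ENNReal.toReal_sub_of_le
          (pow_le_pow_left₀ zero_le (ENNReal.ofReal_le_ofReal (by linarith)) d)
          (ENNReal.pow_ne_top ENNReal.ofReal_ne_top)]
      simp only [ENNReal.toReal_pow, ENNReal.toReal_ofReal (by positivity : (0:ℝ) ≤ 2*h),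
        ENNReal.toReal_ofReal (by positivity : (0:ℝ) ≤ 2*s)]
      rfl
    · have hsh : h < s := by
        rw [hs, one_div, ← hcb]
        exact Real.rpow_lt_rpow hc0.le htc (by positivity)
      have : Metric.ball (0:Fin d → ℝ) h \ Metric.closedBall 0 s = ∅ := by
        rw [Set.diff_eq_empty]
        exact Metric.ball_subset_closedBall.trans (Metric.closedBall_subset_closedBall hsh.le)
      rw [this, Set.indicator_of_notMem (by simp [htc.not_ge] : t ∉ Ioc 0 c)]
      simp
  rw [hlayer, setIntegral_congr_fun measurableSet_Ioi hmeas,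
    setIntegral_indicator measurableSet_Ioc,
    Set.inter_eq_self_of_subset_right Set.Ioc_subset_Ioi_self,
    ← intervalIntegral.integral_of_le hc0.le]
  have hgeq : EqOn g (fun t => (2*h)^d - 2^d * t ^ ((d:ℝ)/β)) (uIcc 0 c) := by
    intro t ht
    rw [Set.uIcc_of_le hc0.le] at ht
    have : (2 * t ^ (1/β))^d = 2^d * t ^ ((d:ℝ)/β) := by
      rw [mul_pow, ← Real.rpow_natCast (t ^ (1/β)) d, ← Real.rpow_mul ht.1, one_div,
        inv_mul_eq_div]
    simp only [hg, this]
  rw [intervalIntegral.integral_congr hgeq]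
  have hp : (-1:ℝ) < (d:ℝ)/β :=
    lt_of_lt_of_le neg_one_lt_zero (div_nonneg d.cast_nonneg hβ.le)
  have hii : IntervalIntegrable (fun t : ℝ => 2^d * t ^ ((d:ℝ)/β)) volume 0 c :=
    (intervalIntegral.intervalIntegrable_rpow' hp).const_mul _
  rw [intervalIntegral.integral_sub (intervalIntegrable_const) hii,
    intervalIntegral.integral_const, intervalIntegral.integral_const_mul,
    integral_rpow (Or.inl hp)]
  have hz : (0:ℝ) ^ ((d:ℝ)/β + 1) = 0 := Real.zero_rpow (by positivity)
  rw [hz]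
  have hβd : (0:ℝ) < (d:ℝ) + β := by positivity
  have e1 : c * (2*h)^d = 2^d * h^((d:ℝ)+β) := by
    rw [hc, mul_pow, ← Real.rpow_natCast h d,
      show (d:ℝ)+β = β + (d:ℝ) from add_comm _ _, Real.rpow_add hh]
    ring
  have e2 : c ^ ((d:ℝ)/β + 1) = h ^ ((d:ℝ)+β) := by
    rw [hc, ← Real.rpow_mul hh.le]
    congr 1
    field_simp
  rw [smul_eq_mul, sub_zero, e2, e1]
  have h1 : (d:ℝ)/β + 1 ≠ 0 := by positivity
  field_simp
  ring
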